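/- Let Σ be a multisigned complete graph on n ≥ 5 vertices and let g be a fixed non-identity element of G. Then every Hamiltonian cycle of Σ has multisign g if and only if every triangle of Σ has multisign g and n is odd. -/

import Mathlib

/-- The multisign of the Hamiltonian cycle listed by the bijection `v`. -/
def hamMultisign {n m : ℕ} [NeZero n] (σ : Fin n → Fin n → (Fin m → ℤˣ))
    (v : Fin n → Fin n) : Fin m → ℤˣ :=
  ∏ k : Fin n, σ (v k) (v (k + 1))

/-- The multisign of the triangle on vertices `a`, `b`, `c`. -/
def triMultisign {n m : ℕ} (σ : Fin n → Fin n → (Fin m → ℤˣ))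
    (a b c : Fin n) : Fin m → ℤˣ :=
  σ a b * σ b c * σ c a

open Fin.NatCast

section Aux

set_option linter.unusedSectionVars false

variable {n m : ℕ} [NeZero n]

lemma msq (x : Fin m → ℤˣ) : x * x = 1 := funext fun _ => Int.units_mul_self _

lemma meq_of_mul_eq_one {x y : Fin m → ℤˣ} (h : x * y = 1) : x = y := by
  have hx : x⁻¹ = x := inv_eq_of_mul_eq_one_right (msq x)
  have hy : y⁻¹ = y := inv_eq_of_mul_eq_one_right (msq y)
  have := eq_inv_of_mul_eq_one_left h
  rwa [hy] at this

lemma mpow_even (x : Fin m → ℤˣ) (k : ℕ) : x ^ (2 * k) = 1 := by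
  have h2 : x ^ 2 = 1 := by rw [pow_two, msq]
  rw [pow_mul, h2, one_pow]

lemma mpow_odd (x : Fin m → ℤˣ) (k : ℕ) : x ^ (2 * k + 1) = x := by
  rw [pow_succ, mpow_even, one_mul]

lemma cast_ne {i j : ℕ} (hi : i < n) (hj : j < n) (hij : i ≠ j) :
    ((i : ℕ) : Fin n) ≠ ((j : ℕ) : Fin n) := by
  intro h
  apply hij
  have := congrArg Fin.val h
  rwa [Fin.val_cast_of_lt hi, Fin.val_cast_of_lt hj] at this

variable (σ : Fin n → Fin n → (Fin m → ℤˣ))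

lemma tele (hsym : ∀ a b, σ a b = σ b a) (w : ℕ → Fin n) (j : ℕ) :
    ∏ k ∈ Finset.range (j + 1), σ (w k) (w (k + 1)) =
      σ (w 0) (w (j + 1)) *
        ∏ k ∈ Finset.Ico 1 (j + 1), triMultisign σ (w 0) (w k) (w (k + 1)) := by
  induction j with
  | zero => simp
  | succ j ih =>
    rw [Finset.prod_range_succ, ih, Finset.prod_Ico_succ_top (by omega : 1 ≤ j + 1)]
    set A := σ (w 0) (w (j + 1))
    set B := σ (w (j + 1)) (w (j + 1 + 1))
    set C := σ (w 0) (w (j + 1 + 1))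
    set P := ∏ k ∈ Finset.Ico 1 (j + 1), triMultisign σ (w 0) (w k) (w (k + 1))
    have hT : triMultisign σ (w 0) (w (j + 1)) (w (j + 1 + 1))
        = A * B * σ (w (j + 1 + 1)) (w 0) := rfl
    rw [hT, hsym (w (j + 1 + 1)) (w 0)]
    have hac : C * (P * (A * B * C)) = (C * C) * (A * (P * B)) := by ac_rfl
    rw [hac, msq, one_mul, ← mul_assoc]

lemma ham_eq (hn : 5 ≤ n) (hsym : ∀ a b, σ a b = σ b a) (v : Fin n → Fin n) :
    hamMultisign σ v = ∏ k ∈ Finset.Ico 1 (n - 1),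
      triMultisign σ (v ((0 : ℕ) : Fin n)) (v ((k : ℕ) : Fin n)) (v (((k + 1 : ℕ)) : Fin n)) := by
  set w : ℕ → Fin n := fun k => v ((k : ℕ) : Fin n) with hw
  have h1 : hamMultisign σ v = ∏ k ∈ Finset.range n, σ (w k) (w (k + 1)) := by
    rw [← Fin.prod_univ_eq_prod_range (fun k => σ (w k) (w (k + 1))) n]
    unfold hamMultisign
    apply Finset.prod_congr rfl
    intro i _
    simp only [hw, Nat.cast_add, Nat.cast_one, Fin.cast_val_eq_self]
  rw [h1, show Finset.range n = Finset.range ((n - 2) + 1 + 1) by congr 1; omega,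
    Finset.prod_range_succ, tele σ hsym w (n - 2)]
  have hwn : w (n - 2 + 1 + 1) = w 0 := by
    simp only [hw]
    rw [show n - 2 + 1 + 1 = n by omega, Fin.natCast_self, Nat.cast_zero]
  rw [hwn, hsym (w (n - 2 + 1)) (w 0), mul_comm (σ (w 0) (w (n - 2 + 1))), mul_assoc, msq,
    mul_one, show n - 2 + 1 = n - 1 by omega]

lemma ham_const (hn : 5 ≤ n) (hsym : ∀ a b, σ a b = σ b a) (h : Fin m → ℤˣ)
    (hT : ∀ a b c : Fin n, a ≠ b → b ≠ c → a ≠ c → triMultisign σ a b c = h)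
    (v : Fin n → Fin n) (hv : Function.Bijective v) :
    hamMultisign σ v = h ^ (n - 2) := by
  rw [ham_eq σ hn hsym v]
  have hne : ∀ i j : ℕ, i < n → j < n → i ≠ j → v ((i : ℕ) : Fin n) ≠ v ((j : ℕ) : Fin n) :=
    fun i j hi hj hij hh => cast_ne hi hj hij (hv.injective hh)
  have hcong : ∏ k ∈ Finset.Ico 1 (n - 1),
      triMultisign σ (v ((0 : ℕ) : Fin n)) (v ((k : ℕ) : Fin n)) (v (((k + 1 : ℕ)) : Fin n))
      = ∏ _k ∈ Finset.Ico 1 (n - 1), h := by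
    apply Finset.prod_congr rfl
    intro k hk
    rw [Finset.mem_Ico] at hk
    exact hT _ _ _ (hne 0 k (by omega) (by omega) (by omega))
      (hne k (k + 1) (by omega) (by omega) (by omega))
      (hne 0 (k + 1) (by omega) (by omega) (by omega))
  rw [hcong, Finset.prod_const, Nat.card_Ico, Nat.sub_sub]

lemma swap4 (hn : 5 ≤ n) (hsym : ∀ a b, σ a b = σ b a) (g : Fin m → ℤˣ)
    (hall : ∀ v : Fin n → Fin n, Function.Bijective v → hamMultisign σ v = g)
    (v : Equiv.Perm (Fin n)) :
    σ (v ((0 : ℕ) : Fin n)) (v ((1 : ℕ) : Fin n)) * σ (v ((2 : ℕ) : Fin n)) (v ((3 : ℕ) : Fin n))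
      = σ (v ((0 : ℕ) : Fin n)) (v ((2 : ℕ) : Fin n)) *
        σ (v ((1 : ℕ) : Fin n)) (v ((3 : ℕ) : Fin n)) := by
  set z0 : Fin n := ((0 : ℕ) : Fin n)
  set z1 : Fin n := ((1 : ℕ) : Fin n)
  set z2 : Fin n := ((2 : ℕ) : Fin n)
  set z3 : Fin n := ((3 : ℕ) : Fin n)
  have hz01 : z0 ≠ z1 := cast_ne (by omega) (by omega) (by omega)
  have hz02 : z0 ≠ z2 := cast_ne (by omega) (by omega) (by omega)
  have hz12 : z1 ≠ z2 := cast_ne (by omega) (by omega) (by omega)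
  have hz13 : z1 ≠ z3 := cast_ne (by omega) (by omega) (by omega)
  have hz23 : z2 ≠ z3 := cast_ne (by omega) (by omega) (by omega)
  have e01 : z0 + 1 = z1 := by simp only [z0, z1, Nat.cast_zero, Nat.cast_one, zero_add]
  have e12 : z1 + 1 = z2 := by
    simp only [z1, z2]
    rw [show ((2 : ℕ) : Fin n) = ((1 + 1 : ℕ) : Fin n) by norm_num, Nat.cast_add, Nat.cast_one]
  have e23 : z2 + 1 = z3 := by
    simp only [z2, z3]
    rw [show ((3 : ℕ) : Fin n) = ((2 + 1 : ℕ) : Fin n) by norm_num, Nat.cast_add, Nat.cast_one]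
  set s := Equiv.swap z1 z2 with hs
  set F : Fin n → Fin m → ℤˣ :=
    fun k => σ (v k) (v (k + 1)) * σ (v (s k)) (v (s (k + 1))) with hF
  have hprod : hamMultisign σ v * hamMultisign σ (⇑v ∘ ⇑s) = ∏ k : Fin n, F k := by
    unfold hamMultisign
    rw [← Finset.prod_mul_distrib]
    rfl
  have hFz : ∀ x : Fin n, x ∉ ({z0, z2} : Finset (Fin n)) → F x = 1 := by
    intro x hx
    simp only [Finset.mem_insert, Finset.mem_singleton, not_or] at hx
    by_cases hx1 : x = z1
    · subst hx1
      simp only [hF, e12, hs, Equiv.swap_apply_left, Equiv.swap_apply_right]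
      rw [hsym (v z2) (v z1), msq]
    · have h1 : s x = x := Equiv.swap_apply_of_ne_of_ne hx1 hx.2
      have h2 : s (x + 1) = x + 1 := by
        apply Equiv.swap_apply_of_ne_of_ne
        · intro h; apply hx.1; rw [← e01] at h; exact add_right_cancel h
        · intro h; apply hx1; rw [← e12] at h; exact add_right_cancel h
      simp only [hF, h1, h2, msq]
  have hpair : ∏ k : Fin n, F k = F z0 * F z2 := by
    rw [← Finset.prod_subset (Finset.subset_univ ({z0, z2} : Finset (Fin n)))
      (fun x _ hx => hFz x hx)]
    exact Finset.prod_pair hz02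
  have hF0 : F z0 = σ (v z0) (v z1) * σ (v z0) (v z2) := by
    have hs0 : s z0 = z0 := Equiv.swap_apply_of_ne_of_ne hz01 hz02
    simp only [hF, e01, hs0, hs, Equiv.swap_apply_left]
    rw [Equiv.swap_apply_of_ne_of_ne hz01 hz02]
  have hF2 : F z2 = σ (v z2) (v z3) * σ (v z1) (v z3) := by
    have hs3 : s z3 = z3 := Equiv.swap_apply_of_ne_of_ne hz13.symm hz23.symm
    simp only [hF, e23, hs, Equiv.swap_apply_right, hs3]
    rw [Equiv.swap_apply_of_ne_of_ne hz13.symm hz23.symm]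
  have hkey : σ (v z0) (v z1) * σ (v z0) (v z2) * (σ (v z2) (v z3) * σ (v z1) (v z3)) = 1 := by
    rw [← hF0, ← hF2, ← hpair, ← hprod, hall v v.bijective,
      hall (⇑v ∘ ⇑s) (v.bijective.comp s.bijective), msq]
  have halg : σ (v z0) (v z1) * σ (v z2) (v z3)
      = σ (v z0) (v z2) * (σ (v z1) (v z3)) := by
    set A := σ (v z0) (v z1); set B := σ (v z0) (v z2)
    set C := σ (v z2) (v z3); set D := σ (v z1) (v z3)
    have : A * C = (A * B * (C * D)) * (B * D) := by
      have : (A * B * (C * D)) * (B * D) = (A * C) * ((B * B) * (D * D)) := by ac_rfl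
      rw [this, msq, msq, one_mul, mul_one]
    rw [this, hkey, one_mul]
  exact halg

lemma swap_ne (u w : Fin n) {x y : Fin n} (hx : x ≠ Equiv.swap u w y) :
    Equiv.swap u w x ≠ y := by
  intro h
  apply hx
  rw [← h, Equiv.swap_apply_self]

lemma exists_perm4 (hn : 5 ≤ n) {a b c d : Fin n} (hab : a ≠ b) (hac : a ≠ c) (had : a ≠ d)
    (hbc : b ≠ c) (hbd : b ≠ d) (hcd : c ≠ d) :
    ∃ v : Equiv.Perm (Fin n), v ((0 : ℕ) : Fin n) = a ∧ v ((1 : ℕ) : Fin n) = b ∧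
      v ((2 : ℕ) : Fin n) = c ∧ v ((3 : ℕ) : Fin n) = d := by
  set z0 : Fin n := ((0 : ℕ) : Fin n)
  set z1 : Fin n := ((1 : ℕ) : Fin n)
  set z2 : Fin n := ((2 : ℕ) : Fin n)
  set z3 : Fin n := ((3 : ℕ) : Fin n)
  have hz01 : z0 ≠ z1 := cast_ne (by omega) (by omega) (by omega)
  have hz02 : z0 ≠ z2 := cast_ne (by omega) (by omega) (by omega)
  have hz03 : z0 ≠ z3 := cast_ne (by omega) (by omega) (by omega)
  have hz12 : z1 ≠ z2 := cast_ne (by omega) (by omega) (by omega)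
  have hz13 : z1 ≠ z3 := cast_ne (by omega) (by omega) (by omega)
  have hz23 : z2 ≠ z3 := cast_ne (by omega) (by omega) (by omega)
  set s1 := Equiv.swap z0 a with hs1
  set b1 := s1 b with hb1
  set s2 := Equiv.swap z1 b1 with hs2
  set c1 := s1 c with hc1
  set c2 := s2 c1 with hc2
  set s3 := Equiv.swap z2 c2 with hs3
  set d1 := s1 d with hd1
  set d2 := s2 d1 with hd2
  set d3 := s3 d2 with hd3
  set s4 := Equiv.swap z3 d3 with hs4
  -- basic non-equalities
  have hb1z0 : b1 ≠ z0 := by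
    rw [hb1, hs1]; exact swap_ne _ _ (by rw [Equiv.swap_apply_left]; exact hab.symm)
  have hc1z0 : c1 ≠ z0 := by
    rw [hc1, hs1]; exact swap_ne _ _ (by rw [Equiv.swap_apply_left]; exact hac.symm)
  have hd1z0 : d1 ≠ z0 := by
    rw [hd1, hs1]; exact swap_ne _ _ (by rw [Equiv.swap_apply_left]; exact had.symm)
  have hc1b1 : c1 ≠ b1 := by
    rw [hc1, hb1]; exact fun h => hbc (Equiv.injective s1 h).symm
  have hd1b1 : d1 ≠ b1 := by
    rw [hd1, hb1]; exact fun h => hbd (Equiv.injective s1 h).symm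
  have hd1c1 : d1 ≠ c1 := by
    rw [hd1, hc1]; exact fun h => hcd (Equiv.injective s1 h).symm
  have hs2z0 : s2 z0 = z0 := by
    rw [hs2]; exact Equiv.swap_apply_of_ne_of_ne hz01 (Ne.symm hb1z0)
  have hc2z0 : c2 ≠ z0 := by
    rw [hc2, hs2]; exact swap_ne _ _ (by rw [← hs2, hs2z0]; exact hc1z0)
  have hc2z1 : c2 ≠ z1 := by
    rw [hc2, hs2]; exact swap_ne _ _ (by rw [Equiv.swap_apply_left]; exact hc1b1)
  have hd2z0 : d2 ≠ z0 := by
    rw [hd2, hs2]; exact swap_ne _ _ (by rw [← hs2, hs2z0]; exact hd1z0)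
  have hd2z1 : d2 ≠ z1 := by
    rw [hd2, hs2]; exact swap_ne _ _ (by rw [Equiv.swap_apply_left]; exact hd1b1)
  have hd2c2 : d2 ≠ c2 := by
    rw [hd2, hc2]; exact fun h => hd1c1 (Equiv.injective s2 h)
  have hs3z0 : s3 z0 = z0 := by
    rw [hs3]; exact Equiv.swap_apply_of_ne_of_ne hz02 (Ne.symm hc2z0)
  have hs3z1 : s3 z1 = z1 := by
    rw [hs3]; exact Equiv.swap_apply_of_ne_of_ne hz12 (Ne.symm hc2z1)
  have hd3z0 : d3 ≠ z0 := by
    rw [hd3, hs3]; exact swap_ne _ _ (by rw [← hs3, hs3z0]; exact hd2z0)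
  have hd3z1 : d3 ≠ z1 := by
    rw [hd3, hs3]; exact swap_ne _ _ (by rw [← hs3, hs3z1]; exact hd2z1)
  have hd3z2 : d3 ≠ z2 := by
    rw [hd3, hs3]; exact swap_ne _ _ (by rw [Equiv.swap_apply_left]; exact hd2c2)
  have hs4z0 : s4 z0 = z0 := by
    rw [hs4]; exact Equiv.swap_apply_of_ne_of_ne hz03 (Ne.symm hd3z0)
  have hs4z1 : s4 z1 = z1 := by
    rw [hs4]; exact Equiv.swap_apply_of_ne_of_ne hz13 (Ne.symm hd3z1)
  have hs4z2 : s4 z2 = z2 := by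
    rw [hs4]; exact Equiv.swap_apply_of_ne_of_ne hz23 (Ne.symm hd3z2)
  have hs2z1 : s2 z1 = b1 := by rw [hs2]; exact Equiv.swap_apply_left _ _
  have hs3z2 : s3 z2 = c2 := by rw [hs3]; exact Equiv.swap_apply_left _ _
  have hs4z3 : s4 z3 = d3 := by rw [hs4]; exact Equiv.swap_apply_left _ _
  have hs1z0 : s1 z0 = a := by rw [hs1]; exact Equiv.swap_apply_left _ _
  have hs1b1 : s1 b1 = b := by rw [hb1, hs1, Equiv.swap_apply_self]
  have hs1c1 : s1 c1 = c := by rw [hc1, hs1, Equiv.swap_apply_self]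
  have hs1d1 : s1 d1 = d := by rw [hd1, hs1, Equiv.swap_apply_self]
  have hs2c2 : s2 c2 = c1 := by rw [hc2, hs2, Equiv.swap_apply_self]
  have hs2d2 : s2 d2 = d1 := by rw [hd2, hs2, Equiv.swap_apply_self]
  have hs3d3 : s3 d3 = d2 := by rw [hd3, hs3, Equiv.swap_apply_self]
  refine ⟨s1 * s2 * s3 * s4, ?_, ?_, ?_, ?_⟩ <;>
    simp only [Equiv.Perm.mul_apply]
  · rw [hs4z0, hs3z0, hs2z0, hs1z0]
  · rw [hs4z1, hs3z1, hs2z1, hs1b1]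
  · rw [hs4z2, hs3z2, hs2c2, hs1c1]
  · rw [hs4z3, hs3d3, hs2d2, hs1d1]

lemma four (hn : 5 ≤ n) (hsym : ∀ a b, σ a b = σ b a) (g : Fin m → ℤˣ)
    (hall : ∀ v : Fin n → Fin n, Function.Bijective v → hamMultisign σ v = g)
    {a b c d : Fin n} (hab : a ≠ b) (hac : a ≠ c) (had : a ≠ d)
    (hbc : b ≠ c) (hbd : b ≠ d) (hcd : c ≠ d) :
    σ a b * σ c d = σ a c * σ b d := by
  obtain ⟨v, h0, h1, h2, h3⟩ := exists_perm4 hn hab hac had hbc hbd hcd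
  have := swap4 σ hn hsym g hall v
  rwa [h0, h1, h2, h3] at this

lemma Tswap12 (hsym : ∀ a b, σ a b = σ b a) (a b c : Fin n) :
    triMultisign σ a b c = triMultisign σ b a c := by
  unfold triMultisign
  rw [hsym a b, hsym b c, hsym c a]
  ac_rfl

lemma Tswap23 (hsym : ∀ a b, σ a b = σ b a) (a b c : Fin n) :
    triMultisign σ a b c = triMultisign σ a c b := by
  unfold triMultisign
  rw [hsym a b, hsym b c, hsym c a]
  ac_rfl

lemma Treplace (hn : 5 ≤ n) (hsym : ∀ a b, σ a b = σ b a) (g : Fin m → ℤˣ)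
    (hall : ∀ v : Fin n → Fin n, Function.Bijective v → hamMultisign σ v = g)
    {a b c d : Fin n} (hab : a ≠ b) (hac : a ≠ c) (hbc : b ≠ c) (had : a ≠ d) (hbd : b ≠ d) :
    triMultisign σ a b c = triMultisign σ a b d := by
  by_cases hcd : c = d
  · rw [hcd]
  · have h1 : σ c b * σ d a = σ c d * σ b a :=
      four σ hn hsym g hall (Ne.symm hbc) hcd (Ne.symm hac) hbd (Ne.symm hab) (Ne.symm had)
    have h2 : σ c a * σ d b = σ c d * σ a b :=
      four σ hn hsym g hall (Ne.symm hac) hcd (Ne.symm hbc) had hab (Ne.symm hbd)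
    apply meq_of_mul_eq_one
    unfold triMultisign
    rw [hsym b c, hsym b d]
    have hac' : (σ a b * σ c b * σ c a) * (σ a b * σ d b * σ d a)
        = (σ a b * σ a b) * ((σ c b * σ d a) * (σ c a * σ d b)) := by ac_rfl
    rw [hac', msq, one_mul, h1, h2, hsym b a]
    exact msq _


lemma pick (hn : 5 ≤ n) (x y : Fin n) :
    ∃ p : Fin n, (p = ((0 : ℕ) : Fin n) ∨ p = ((1 : ℕ) : Fin n) ∨ p = ((2 : ℕ) : Fin n)) ∧
      p ≠ x ∧ p ≠ y := by
  have hz01 : ((0 : ℕ) : Fin n) ≠ ((1 : ℕ) : Fin n) := cast_ne (by omega) (by omega) (by omega)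
  have hz02 : ((0 : ℕ) : Fin n) ≠ ((2 : ℕ) : Fin n) := cast_ne (by omega) (by omega) (by omega)
  have hz12 : ((1 : ℕ) : Fin n) ≠ ((2 : ℕ) : Fin n) := cast_ne (by omega) (by omega) (by omega)
  by_cases h0 : ((0 : ℕ) : Fin n) ≠ x ∧ ((0 : ℕ) : Fin n) ≠ y
  · exact ⟨_, Or.inl rfl, h0⟩
  by_cases h1 : ((1 : ℕ) : Fin n) ≠ x ∧ ((1 : ℕ) : Fin n) ≠ y
  · exact ⟨_, Or.inr (Or.inl rfl), h1⟩
  rw [not_and_or, not_not, not_not] at h0 h1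
  refine ⟨_, Or.inr (Or.inr rfl), ?_, ?_⟩
  · intro h
    rcases h0 with h0 | h0
    · exact hz02 (h0.trans h.symm)
    · rcases h1 with h1 | h1
      · exact hz12 (h1.trans h.symm)
      · exact hz01 (h0.trans h1.symm)
  · intro h
    rcases h0 with h0 | h0
    · rcases h1 with h1 | h1
      · exact hz01 (h0.trans h1.symm)
      · exact hz12 (h1.trans h.symm)
    · exact hz02 (h0.trans h.symm)

lemma Tconst (hn : 5 ≤ n) (hsym : ∀ a b, σ a b = σ b a) (g : Fin m → ℤˣ)
    (hall : ∀ v : Fin n → Fin n, Function.Bijective v → hamMultisign σ v = g)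
    {a b c : Fin n} (hab : a ≠ b) (hbc : b ≠ c) (hac : a ≠ c) :
    triMultisign σ a b c
      = triMultisign σ ((0 : ℕ) : Fin n) ((1 : ℕ) : Fin n) ((2 : ℕ) : Fin n) := by
  obtain ⟨p, hpm, hpa, hpb⟩ := pick hn a b
  have st1 : triMultisign σ a b c = triMultisign σ a b p :=
    Treplace σ hn hsym g hall hab hac hbc (Ne.symm hpa) (Ne.symm hpb)
  obtain ⟨q, hqm, hqp, hqa⟩ := pick hn p a
  have st2 : triMultisign σ a b p = triMultisign σ p a b := by
    rw [Tswap23 σ hsym a b p, Tswap12 σ hsym a p b]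
  have st3 : triMultisign σ p a b = triMultisign σ p a q :=
    Treplace σ hn hsym g hall hpa hpb hab (Ne.symm hqp) (Ne.symm hqa)
  obtain ⟨r, hrm, hrp, hrq⟩ := pick hn p q
  have st4 : triMultisign σ p a q = triMultisign σ p q a := Tswap23 σ hsym p a q
  have st5 : triMultisign σ p q a = triMultisign σ p q r :=
    Treplace σ hn hsym g hall (Ne.symm hqp) hpa hqa (Ne.symm hrp) (Ne.symm hrq)
  rw [st1, st2, st3, st4, st5]
  clear st1 st2 st3 st4 st5 hpa hpb hqa hab hbc hac
  rcases hpm with rfl | rfl | rfl <;> rcases hqm with rfl | rfl | rfl <;>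
      rcases hrm with rfl | rfl | rfl <;>
    first
      | exact absurd rfl hqp
      | exact absurd rfl hrp
      | exact absurd rfl hrq
      | rfl
      | exact Tswap23 σ hsym _ _ _
      | exact Tswap12 σ hsym _ _ _
      | exact (Tswap23 σ hsym _ _ _).trans (Tswap12 σ hsym _ _ _)
      | exact (Tswap12 σ hsym _ _ _).trans (Tswap23 σ hsym _ _ _)
      | exact (Tswap23 σ hsym _ _ _).trans ((Tswap12 σ hsym _ _ _).trans (Tswap23 σ hsym _ _ _))

end Aux

/-- All Hamiltonian cycles have multisign `g ≠ e` iff all triangles have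
multisign `g` and `n` is odd. -/
theorem all_ham_multisign_g_iff (n m : ℕ) (hn : 5 ≤ n) [NeZero n]
    (σ : Fin n → Fin n → (Fin m → ℤˣ))
    (hsym : ∀ a b, σ a b = σ b a)
    (g : Fin m → ℤˣ) (hg : g ≠ 1) :
    (∀ v : Fin n → Fin n, Function.Bijective v → hamMultisign σ v = g) ↔
      ((∀ a b c : Fin n, a ≠ b → b ≠ c → a ≠ c → triMultisign σ a b c = g) ∧
        Odd n) := by
  constructor
  · intro hall
    have hgh : g = triMultisign σ ((0 : ℕ) : Fin n) ((1 : ℕ) : Fin n) ((2 : ℕ) : Fin n)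
        ^ (n - 2) :=
      (hall id Function.bijective_id).symm.trans
        (ham_const σ hn hsym _ (fun a b c hab hbc hac => Tconst σ hn hsym g hall hab hbc hac)
          id Function.bijective_id)
    rcases Nat.even_or_odd n with he | ho
    · exfalso
      obtain ⟨k, hk⟩ := he
      rw [show n - 2 = 2 * (k - 1) from by omega, mpow_even] at hgh
      exact hg hgh
    · obtain ⟨k, hk⟩ := ho
      rw [show n - 2 = 2 * (k - 1) + 1 from by omega, mpow_odd] at hgh
      exact ⟨fun a b c hab hbc hac =>
        (Tconst σ hn hsym g hall hab hbc hac).trans hgh.symm, ⟨k, hk⟩⟩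
  · rintro ⟨hT, ho⟩ v hv
    have h := ham_const σ hn hsym g hT v hv
    obtain ⟨k, hk⟩ := ho
    rwa [show n - 2 = 2 * (k - 1) + 1 from by omega, mpow_odd] at h
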